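/- Let p ≥ 5 be a prime and m ≥ 1 an integer. The number of pairs of integers (A,B) with 0 ≤ A < p^{m+6}, 0 ≤ B < p^{m+6}, such that p² exactly divides A (p² ∣ A and p³ ∤ A), p³ exactly divides B (p³ ∣ B and p⁴ ∤ B), and the p-adic valuation of 4(A/p²)³ + 27(B/p³)² is exactly m, equals p^{m+5}(p−1)². (This condition depends only on (A,B) modulo p^{m+6}, and characterizes Kodaira–Néron type I_m* at p for the minimal model y² = x³+Ax+B.) -/

import Mathlib

namespace Stmt7

variable {p m : ℕ}

abbrev R (p m : ℕ) := ZMod (p ^ (m + 1))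

def a0 (p m : ℕ) (t : (R p m)ˣ) (c : Fin (p - 1)) : R p m :=
  (((c.val + 1) * p ^ m : ℕ) - 27 * (t : R p m) ^ 2) * (4 : R p m)⁻¹

def f (p m : ℕ) : (R p m)ˣ × Fin (p - 1) × Fin (p ^ 3) × Fin (p ^ 2) → ℤ × ℤ :=
  fun x =>
    ((p ^ 2 * ((a0 p m x.1 x.2.1).val + x.2.2.1.val * p ^ (m + 1)) : ℕ),
     (p ^ 3 * (((x.1 : R p m) * a0 p m x.1 x.2.1).val + x.2.2.2.val * p ^ (m + 1)) : ℕ))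

lemma neZeroQ (hp : p.Prime) : NeZero (p ^ (m + 1)) := ⟨pow_ne_zero _ hp.pos.ne'⟩

lemma isUnit_iff (hp : p.Prime) (x : R p m) : IsUnit x ↔ ¬ p ∣ x.val := by
  haveI := neZeroQ (m := m) hp
  have hx : ((x.val : ℕ) : R p m) = x := by rw [ZMod.natCast_val, ZMod.cast_id]
  conv_lhs => rw [← hx]
  rw [ZMod.isUnit_iff_coprime]
  rw [Nat.coprime_pow_right_iff (Nat.succ_pos m), Nat.coprime_comm]
  exact hp.coprime_iff_not_dvd

lemma unit4 (hp : p.Prime) (h5 : 5 ≤ p) : IsUnit (4 : R p m) := by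
  have h : (4 : R p m) = ((4 : ℕ) : R p m) := by norm_num
  rw [h, ZMod.isUnit_iff_coprime]
  apply Nat.Coprime.pow_right
  rw [Nat.coprime_comm]
  refine hp.coprime_iff_not_dvd.mpr fun hd => ?_
  have := Nat.le_of_dvd (by norm_num) hd
  omega

lemma pm_mul (hp : p.Prime) (x : R p m) :
    (p : R p m) ^ m * x = (p : R p m) ^ m * ((x.val % p : ℕ) : R p m) := by
  haveI := neZeroQ (m := m) hp
  have hx : ((x.val : ℕ) : R p m) = x := by rw [ZMod.natCast_val, ZMod.cast_id]
  have h0 : (p : R p m) ^ (m + 1) = 0 := by rw [← Nat.cast_pow, ZMod.natCast_self]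
  conv_lhs => rw [← hx, ← Nat.mod_add_div x.val p]
  push_cast
  calc (p : R p m) ^ m * ((x.val % p : ℕ) + (p : R p m) * ((x.val / p : ℕ) : R p m))
      = (p : R p m) ^ m * ((x.val % p : ℕ) : R p m)
        + (p : R p m) ^ (m + 1) * ((x.val / p : ℕ) : R p m) := by ring
    _ = (p : R p m) ^ m * ((x.val % p : ℕ) : R p m) := by rw [h0]; ring

lemma exact_val (hp : p.Prime) (n : ℤ) (w : R p m) (hw : IsUnit w)
    (h : (n : R p m) = (p : R p m) ^ m * w) :
    (p : ℤ) ^ m ∣ n ∧ ¬ (p : ℤ) ^ (m + 1) ∣ n := by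
  haveI := neZeroQ (m := m) hp
  have hv : ((p : ℤ) ^ (m + 1)) ∣ n - (p ^ m * w.val : ℕ) := by
    have h1 : ((n - (p ^ m * w.val : ℕ) : ℤ) : R p m) = 0 := by
      push_cast
      rw [h, ZMod.natCast_val, ZMod.cast_id]
      ring
    have h2 := (ZMod.intCast_zmod_eq_zero_iff_dvd _ _).mp h1
    exact_mod_cast h2
  obtain ⟨k, hk⟩ := hv
  have hn : n = (p : ℤ) ^ m * w.val + (p : ℤ) ^ (m + 1) * k := by push_cast at hk ⊢; linarith
  constructor
  · rw [hn]
    exact dvd_add (Dvd.intro _ rfl) ⟨p * k, by ring⟩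
  · intro hd
    have h1 : (p : ℤ) ^ (m + 1) ∣ (p : ℤ) ^ m * w.val := by
      have he : (p : ℤ) ^ m * w.val = n - (p : ℤ) ^ (m + 1) * k := by linarith
      rw [he]
      exact dvd_sub hd ⟨k, rfl⟩
    obtain ⟨d, hd2⟩ := h1
    have hpm : (p : ℤ) ^ m ≠ 0 := pow_ne_zero _ (by exact_mod_cast hp.pos.ne')
    have h2 : (w.val : ℤ) = p * d := by
      apply mul_left_cancel₀ hpm
      rw [hd2]; ring
    have h3 : p ∣ w.val := by
      have : (p : ℤ) ∣ (w.val : ℤ) := ⟨d, h2⟩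
      exact_mod_cast this
    exact (isUnit_iff hp w).mp hw h3


lemma unit_inv4 (hp : p.Prime) (h5 : 5 ≤ p) : IsUnit ((4 : R p m)⁻¹) :=
  IsUnit.of_mul_eq_one _ (ZMod.inv_mul_of_unit _ (unit4 hp h5))

lemma four_a0 (hp : p.Prime) (h5 : 5 ≤ p) (t : (R p m)ˣ) (c : Fin (p - 1)) :
    4 * a0 p m t c = (((c.val + 1) * p ^ m : ℕ) : R p m) - 27 * (t : R p m) ^ 2 := by
  unfold a0
  rw [mul_comm (4 : R p m), mul_assoc, ZMod.inv_mul_of_unit _ (unit4 hp h5), mul_one]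

lemma key (hp : p.Prime) (h5 : 5 ≤ p) (t : (R p m)ˣ) (c : Fin (p - 1)) :
    4 * a0 p m t c + 27 * (t : R p m) ^ 2 = (((c.val + 1) * p ^ m : ℕ) : R p m) := by
  rw [four_a0 hp h5]; ring

lemma unit27 (hp : p.Prime) (h5 : 5 ≤ p) : IsUnit (27 : ZMod p) := by
  haveI : Fact p.Prime := ⟨hp⟩
  have h : (27 : ZMod p) = ((27 : ℕ) : ZMod p) := by norm_num
  rw [h, ZMod.isUnit_iff_coprime, Nat.coprime_comm]
  refine hp.coprime_iff_not_dvd.mpr fun hd => ?_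
  have hd' : p ∣ 3 ^ 3 := by norm_num; exact hd
  have h3 : p ∣ 3 := hp.dvd_of_dvd_pow hd'
  have := Nat.le_of_dvd (by norm_num) h3
  omega

lemma a0_unit (hp : p.Prime) (h5 : 5 ≤ p) (hm : 1 ≤ m) (t : (R p m)ˣ) (c : Fin (p - 1)) :
    IsUnit (a0 p m t c) := by
  haveI := neZeroQ (m := m) hp
  haveI : Fact p.Prime := ⟨hp⟩
  set u : R p m := (((c.val + 1) * p ^ m : ℕ) : R p m) - 27 * (t : R p m) ^ 2 with hu
  have hUu : IsUnit u := by
    rw [isUnit_iff hp]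
    intro hd
    have hφ : ((u.val : ℕ) : ZMod p) = 0 := (ZMod.natCast_eq_zero_iff _ _).mpr hd
    have hcast : ((u.val : ℕ) : ZMod p) = ZMod.castHom (dvd_pow_self p (Nat.succ_ne_zero m)) (ZMod p) u := by
      rw [ZMod.natCast_val]; rfl
    set φ := ZMod.castHom (dvd_pow_self p (Nat.succ_ne_zero m)) (ZMod p)
    have hφu : φ u = - (27 * (φ (t : R p m)) ^ 2) := by
      rw [hu]
      have h0 : (((c.val + 1) * p ^ m : ℕ) : ZMod p) = 0 := by
        rw [ZMod.natCast_eq_zero_iff]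
        exact Dvd.dvd.mul_left (dvd_pow_self p (by omega)) _
      rw [map_sub, map_mul, map_pow, map_natCast, map_ofNat, h0]
      ring
    have hunit : IsUnit (φ u) := by
      rw [hφu]
      exact ((unit27 hp h5).mul ((t.isUnit.map φ).pow 2)).neg
    rw [← hcast, hφ] at hunit
    exact hunit.ne_zero rfl
  exact hUu.mul (unit_inv4 hp h5)


lemma unit_c (hp : p.Prime) (c : Fin (p - 1)) : IsUnit (((c.val + 1 : ℕ)) : R p m) := by
  rw [ZMod.isUnit_iff_coprime]
  apply Nat.Coprime.pow_right
  rw [Nat.coprime_comm]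
  refine hp.coprime_iff_not_dvd.mpr fun hd => ?_
  have h1 := Nat.le_of_dvd (by omega) hd
  have h2 := c.isLt
  omega

lemma cast_p_pow_zero (hp : p.Prime) : ((p : R p m)) ^ (m + 1) = 0 := by
  rw [← Nat.cast_pow, ZMod.natCast_self]

lemma mem (hp : p.Prime) (h5 : 5 ≤ p) (hm : 1 ≤ m)
    (x : (R p m)ˣ × Fin (p - 1) × Fin (p ^ 3) × Fin (p ^ 2)) :
    0 ≤ (f p m x).1 ∧ (f p m x).1 < (p : ℤ) ^ (m + 6) ∧
    0 ≤ (f p m x).2 ∧ (f p m x).2 < (p : ℤ) ^ (m + 6) ∧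
    ((p : ℤ) ^ 2 ∣ (f p m x).1 ∧ ¬ (p : ℤ) ^ 3 ∣ (f p m x).1) ∧
    ((p : ℤ) ^ 3 ∣ (f p m x).2 ∧ ¬ (p : ℤ) ^ 4 ∣ (f p m x).2) ∧
    (p : ℤ) ^ m ∣ (4 * ((f p m x).1 / (p : ℤ) ^ 2) ^ 3 + 27 * ((f p m x).2 / (p : ℤ) ^ 3) ^ 2) ∧
    ¬ (p : ℤ) ^ (m + 1) ∣ (4 * ((f p m x).1 / (p : ℤ) ^ 2) ^ 3 + 27 * ((f p m x).2 / (p : ℤ) ^ 3) ^ 2) := by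
  haveI := neZeroQ (m := m) hp
  obtain ⟨t, c, i, j⟩ := x
  set A0 : R p m := a0 p m t c with hA0
  set aN : ℕ := A0.val + i.val * p ^ (m + 1) with haN
  set bN : ℕ := ((t : R p m) * A0).val + j.val * p ^ (m + 1) with hbN
  have hfx : f p m (t, c, i, j) = (((p ^ 2 * aN : ℕ) : ℤ), ((p ^ 3 * bN : ℕ) : ℤ)) := rfl
  rw [hfx]
  dsimp only
  have hppos : 0 < p := hp.pos
  have hPpos : 0 < p ^ (m + 1) := by positivity
  have hvala : A0.val < p ^ (m + 1) := ZMod.val_lt A0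
  have hvalb : ((t : R p m) * A0).val < p ^ (m + 1) := ZMod.val_lt _
  have haU : IsUnit A0 := a0_unit hp h5 hm t c
  have hbU : IsUnit ((t : R p m) * A0) := t.isUnit.mul haU
  have hia : aN < p ^ (m + 4) := by
    calc aN < p ^ (m + 1) + i.val * p ^ (m + 1) := Nat.add_lt_add_right hvala _
      _ = (i.val + 1) * p ^ (m + 1) := by ring
      _ ≤ p ^ 3 * p ^ (m + 1) := Nat.mul_le_mul_right _ i.isLt
      _ = p ^ (m + 4) := by ring
  have hib : bN < p ^ (m + 3) := by
    calc bN < p ^ (m + 1) + j.val * p ^ (m + 1) := Nat.add_lt_add_right hvalb _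
      _ = (j.val + 1) * p ^ (m + 1) := by ring
      _ ≤ p ^ 2 * p ^ (m + 1) := Nat.mul_le_mul_right _ j.isLt
      _ = p ^ (m + 3) := by ring
  have hpa : ¬ p ∣ aN := by
    intro hd
    have hmul : p ∣ i.val * p ^ (m + 1) := Dvd.dvd.mul_left (dvd_pow_self p (Nat.succ_ne_zero m)) _
    have h1 : p ∣ A0.val := by
      have := Nat.dvd_sub hd hmul
      simpa [haN] using this
    exact (isUnit_iff hp A0).mp haU h1
  have hpb : ¬ p ∣ bN := by
    intro hd
    have hmul : p ∣ j.val * p ^ (m + 1) := Dvd.dvd.mul_left (dvd_pow_self p (Nat.succ_ne_zero m)) _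
    have h1 : p ∣ ((t : R p m) * A0).val := by
      have := Nat.dvd_sub hd hmul
      simpa [hbN] using this
    exact (isUnit_iff hp _).mp hbU h1
  have hdiv1 : ((p ^ 2 * aN : ℕ) : ℤ) / (p : ℤ) ^ 2 = (aN : ℤ) := by
    push_cast
    exact Int.mul_ediv_cancel_left _ (by positivity)
  have hdiv2 : ((p ^ 3 * bN : ℕ) : ℤ) / (p : ℤ) ^ 3 = (bN : ℤ) := by
    push_cast
    exact Int.mul_ediv_cancel_left _ (by positivity)
  have h0 : ((p : R p m)) ^ (m + 1) = 0 := cast_p_pow_zero hp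
  have e1 : ((aN : ℕ) : R p m) = A0 := by
    have h1 : ((aN : ℕ) : R p m) = (A0.val : R p m) + (i.val : R p m) * (p : R p m) ^ (m + 1) := by
      rw [haN]; push_cast; ring
    rw [h1, h0, ZMod.natCast_val, ZMod.cast_id]; ring
  have e2 : ((bN : ℕ) : R p m) = (t : R p m) * A0 := by
    have h1 : ((bN : ℕ) : R p m) = (((t : R p m) * A0).val : R p m) + (j.val : R p m) * (p : R p m) ^ (m + 1) := by
      rw [hbN]; push_cast; ring
    rw [h1, h0, ZMod.natCast_val, ZMod.cast_id]; ring
  have hcast : ((4 * (aN : ℤ) ^ 3 + 27 * (bN : ℤ) ^ 2 : ℤ) : R p m)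
      = (p : R p m) ^ m * (A0 ^ 2 * ((c.val + 1 : ℕ) : R p m)) := by
    calc ((4 * (aN : ℤ) ^ 3 + 27 * (bN : ℤ) ^ 2 : ℤ) : R p m)
        = 4 * ((aN : ℕ) : R p m) ^ 3 + 27 * ((bN : ℕ) : R p m) ^ 2 := by push_cast; ring
      _ = A0 ^ 2 * (4 * A0 + 27 * (t : R p m) ^ 2) := by rw [e1, e2]; ring
      _ = A0 ^ 2 * (((c.val + 1) * p ^ m : ℕ) : R p m) := by rw [key hp h5]
      _ = (p : R p m) ^ m * (A0 ^ 2 * ((c.val + 1 : ℕ) : R p m)) := by push_cast; ring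
  have hw : IsUnit (A0 ^ 2 * ((c.val + 1 : ℕ) : R p m)) := (haU.pow 2).mul (unit_c hp c)
  have hval := exact_val hp _ _ hw hcast
  refine ⟨by positivity, ?_, by positivity, ?_, ⟨⟨(aN : ℤ), by push_cast; ring⟩, ?_⟩,
    ⟨⟨(bN : ℤ), by push_cast; ring⟩, ?_⟩, ?_, ?_⟩
  · have h2n : p ^ 2 * aN < p ^ (m + 6) := by
      calc p ^ 2 * aN < p ^ 2 * p ^ (m + 4) := by
            exact (mul_lt_mul_iff_right₀ (by positivity)).mpr hia
        _ = p ^ (m + 6) := by ring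
    exact_mod_cast h2n
  · have h2n : p ^ 3 * bN < p ^ (m + 6) := by
      calc p ^ 3 * bN < p ^ 3 * p ^ (m + 3) := by
            exact (mul_lt_mul_iff_right₀ (by positivity)).mpr hib
        _ = p ^ (m + 6) := by ring
    exact_mod_cast h2n
  · intro hd
    have hd' : (p ^ 3 : ℕ) ∣ (p ^ 2 * aN : ℕ) := by exact_mod_cast hd
    have h1 : p ^ 2 * p ∣ p ^ 2 * aN := by rw [← pow_succ]; exact hd'
    exact hpa ((Nat.mul_dvd_mul_iff_left (by positivity : 0 < p ^ 2)).mp h1)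
  · intro hd
    have hd' : (p ^ 4 : ℕ) ∣ (p ^ 3 * bN : ℕ) := by exact_mod_cast hd
    have h1 : p ^ 3 * p ∣ p ^ 3 * bN := by rw [← pow_succ]; exact hd'
    exact hpb ((Nat.mul_dvd_mul_iff_left (by positivity : 0 < p ^ 3)).mp h1)
  · rw [hdiv1, hdiv2]; exact hval.1
  · rw [hdiv1, hdiv2]; exact hval.2


lemma split_eq (hp : p.Prime) {u v : R p m} {x y : ℕ}
    (h : u.val + x * p ^ (m + 1) = v.val + y * p ^ (m + 1)) : u = v ∧ x = y := by
  haveI := neZeroQ (m := m) hp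
  have hPpos : 0 < p ^ (m + 1) := pow_pos hp.pos _
  have hu := ZMod.val_lt u
  have hv := ZMod.val_lt v
  have hval : u.val = v.val := by
    have h1 : (u.val + x * p ^ (m + 1)) % p ^ (m + 1) = (v.val + y * p ^ (m + 1)) % p ^ (m + 1) := by
      rw [h]
    rwa [Nat.add_mul_mod_self_right, Nat.add_mul_mod_self_right,
      Nat.mod_eq_of_lt hu, Nat.mod_eq_of_lt hv] at h1
  constructor
  · have h2 : ((u.val : ℕ) : R p m) = ((v.val : ℕ) : R p m) := by rw [hval]
    rwa [ZMod.natCast_val, ZMod.cast_id, ZMod.natCast_val, ZMod.cast_id] at h2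
  · rw [hval] at h
    exact Nat.eq_of_mul_eq_mul_right hPpos (Nat.add_left_cancel h)

lemma f_inj (hp : p.Prime) (h5 : 5 ≤ p) (hm : 1 ≤ m) : Function.Injective (f p m) := by
  haveI := neZeroQ (m := m) hp
  rintro ⟨t, c, i, j⟩ ⟨t', c', i', j'⟩ h
  simp only [f, Prod.mk.injEq, Nat.cast_inj] at h
  obtain ⟨h1, h2⟩ := h
  have e1 := Nat.eq_of_mul_eq_mul_left (by positivity : 0 < p ^ 2) h1
  have e2 := Nat.eq_of_mul_eq_mul_left (by positivity : 0 < p ^ 3) h2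
  obtain ⟨hA0eq, hii⟩ := split_eq hp e1
  obtain ⟨hB0eq, hjj⟩ := split_eq hp e2
  have hU := a0_unit hp h5 hm t c
  have htt : t = t' := by
    rw [← hA0eq] at hB0eq
    exact Units.ext (hU.mul_right_cancel hB0eq)
  subst htt
  have hcc : c = c' := by
    have h4 : 4 * a0 p m t c = 4 * a0 p m t c' := by rw [hA0eq]
    rw [four_a0 hp h5, four_a0 hp h5] at h4
    have h5' : (((c.val + 1) * p ^ m : ℕ) : R p m) = (((c'.val + 1) * p ^ m : ℕ) : R p m) :=
      sub_left_injective h4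
    have hlt : (c.val + 1) * p ^ m < p ^ (m + 1) := by
      have hc := c.isLt
      calc (c.val + 1) * p ^ m < p * p ^ m := by
            exact (Nat.mul_lt_mul_right (pow_pos hp.pos m)).mpr (by omega)
        _ = p ^ (m + 1) := by ring
    have hlt' : (c'.val + 1) * p ^ m < p ^ (m + 1) := by
      have hc := c'.isLt
      calc (c'.val + 1) * p ^ m < p * p ^ m := by
            exact (Nat.mul_lt_mul_right (pow_pos hp.pos m)).mpr (by omega)
        _ = p ^ (m + 1) := by ring
    have hnat : (c.val + 1) * p ^ m = (c'.val + 1) * p ^ m := by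
      have := congrArg ZMod.val h5'
      rwa [ZMod.val_cast_of_lt hlt, ZMod.val_cast_of_lt hlt'] at this
    have := Nat.eq_of_mul_eq_mul_right (pow_pos hp.pos m) hnat
    exact Fin.ext (by omega)
  subst hcc
  exact Prod.ext rfl (Prod.ext rfl (Prod.ext (Fin.ext hii) (Fin.ext hjj)))


lemma unit_natCast (hp : p.Prime) {k : ℕ} (hk : ¬ p ∣ k) : IsUnit ((k : ℕ) : R p m) := by
  haveI := neZeroQ (m := m) hp
  rw [isUnit_iff hp]
  intro hd
  rw [ZMod.val_natCast] at hd
  exact hk ((Nat.dvd_mod_iff (dvd_pow_self p (Nat.succ_ne_zero m))).mp hd)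

lemma surj (hp : p.Prime) (h5 : 5 ≤ p) (hm : 1 ≤ m) (A B : ℤ)
    (h1 : 0 ≤ A) (h2 : A < (p : ℤ) ^ (m + 6)) (h3 : 0 ≤ B) (h4 : B < (p : ℤ) ^ (m + 6))
    (h5a : (p : ℤ) ^ 2 ∣ A) (h5b : ¬ (p : ℤ) ^ 3 ∣ A)
    (h6a : (p : ℤ) ^ 3 ∣ B) (h6b : ¬ (p : ℤ) ^ 4 ∣ B)
    (h7 : (p : ℤ) ^ m ∣ (4 * (A / (p : ℤ) ^ 2) ^ 3 + 27 * (B / (p : ℤ) ^ 3) ^ 2))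
    (h8 : ¬ (p : ℤ) ^ (m + 1) ∣ (4 * (A / (p : ℤ) ^ 2) ^ 3 + 27 * (B / (p : ℤ) ^ 3) ^ 2)) :
    ∃ x, f p m x = (A, B) := by
  haveI := neZeroQ (m := m) hp
  have hp2 : ((p : ℤ) ^ 2) ≠ 0 := by positivity
  have hp3 : ((p : ℤ) ^ 3) ≠ 0 := by positivity
  obtain ⟨a, ha⟩ := h5a
  obtain ⟨b, hb⟩ := h6a
  have hdivA : A / (p : ℤ) ^ 2 = a := by rw [ha]; exact Int.mul_ediv_cancel_left _ hp2
  have hdivB : B / (p : ℤ) ^ 3 = b := by rw [hb]; exact Int.mul_ediv_cancel_left _ hp3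
  have ha0 : 0 ≤ a := by rw [← hdivA]; exact Int.ediv_nonneg h1 (by positivity)
  have hb0 : 0 ≤ b := by rw [← hdivB]; exact Int.ediv_nonneg h3 (by positivity)
  set aN : ℕ := a.toNat with haNdef
  set bN : ℕ := b.toNat with hbNdef
  have haZ : (aN : ℤ) = a := Int.toNat_of_nonneg ha0
  have hbZ : (bN : ℤ) = b := Int.toNat_of_nonneg hb0
  -- bounds
  have h2' : a < (p : ℤ) ^ (m + 4) := by
    rw [ha] at h2
    have he : (p : ℤ) ^ (m + 6) = (p : ℤ) ^ 2 * (p : ℤ) ^ (m + 4) := by ring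
    rw [he] at h2
    exact lt_of_mul_lt_mul_left h2 (by positivity)
  have h4' : b < (p : ℤ) ^ (m + 3) := by
    rw [hb] at h4
    have he : (p : ℤ) ^ (m + 6) = (p : ℤ) ^ 3 * (p : ℤ) ^ (m + 3) := by ring
    rw [he] at h4
    exact lt_of_mul_lt_mul_left h4 (by positivity)
  have haNlt : aN < p ^ (m + 4) := by
    have : (aN : ℤ) < (p : ℤ) ^ (m + 4) := by rw [haZ]; exact h2'
    exact_mod_cast this
  have hbNlt : bN < p ^ (m + 3) := by
    have : (bN : ℤ) < (p : ℤ) ^ (m + 3) := by rw [hbZ]; exact h4'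
    exact_mod_cast this
  -- non-divisibility
  have hpa : ¬ p ∣ aN := by
    intro hd
    obtain ⟨k, hk⟩ := hd
    apply h5b
    refine ⟨(k : ℤ), ?_⟩
    rw [ha, ← haZ, hk]
    push_cast
    ring
  have hpb : ¬ p ∣ bN := by
    intro hd
    obtain ⟨k, hk⟩ := hd
    apply h6b
    refine ⟨(k : ℤ), ?_⟩
    rw [hb, ← hbZ, hk]
    push_cast
    ring
  -- the valuation data
  rw [hdivA, hdivB] at h7 h8
  have hn7 : (p ^ m : ℕ) ∣ (4 * aN ^ 3 + 27 * bN ^ 2 : ℕ) := by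
    have : ((p ^ m : ℕ) : ℤ) ∣ ((4 * aN ^ 3 + 27 * bN ^ 2 : ℕ) : ℤ) := by
      push_cast [haZ, hbZ]
      exact_mod_cast h7
    exact_mod_cast this
  obtain ⟨n', hn'⟩ := hn7
  have hpn' : ¬ p ∣ n' := by
    intro hd
    obtain ⟨k, hk⟩ := hd
    apply h8
    refine ⟨(k : ℤ), ?_⟩
    have : (4 * aN ^ 3 + 27 * bN ^ 2 : ℕ) = p ^ (m + 1) * k := by rw [hn', hk]; ring
    have hZ : ((4 * aN ^ 3 + 27 * bN ^ 2 : ℕ) : ℤ) = ((p ^ (m + 1) * k : ℕ) : ℤ) := by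
      exact_mod_cast congrArg (Nat.cast : ℕ → ℤ) this
    push_cast [haZ, hbZ] at hZ
    linarith [hZ]
  -- units
  have hau : IsUnit ((aN : ℕ) : R p m) := unit_natCast hp hpa
  have hbu : IsUnit ((bN : ℕ) : R p m) := unit_natCast hp hpb
  have hn'u : IsUnit ((n' : ℕ) : R p m) := unit_natCast hp hpn'
  set t : (R p m)ˣ := hbu.unit * hau.unit⁻¹ with htdef
  have htR : (t : R p m) = (bN : R p m) * (↑hau.unit⁻¹ : R p m) := by
    rw [htdef, Units.val_mul, hbu.unit_spec]
  have hinv : (↑hau.unit⁻¹ : R p m) * ((aN : ℕ) : R p m) = 1 := by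
    exact hau.val_inv_mul
  set δ : R p m := (↑hau.unit⁻¹ : R p m) ^ 2 * ((n' : ℕ) : R p m) with hδdef
  have hδu : IsUnit δ := ((hau.unit⁻¹).isUnit.pow 2).mul hn'u
  have hδv : ¬ p ∣ δ.val := (isUnit_iff hp δ).mp hδu
  have hmodpos : 0 < δ.val % p := Nat.pos_of_ne_zero (fun h => hδv (Nat.dvd_of_mod_eq_zero h))
  have hmodlt : δ.val % p < p := Nat.mod_lt _ hp.pos
  set c : Fin (p - 1) := ⟨δ.val % p - 1, by omega⟩ with hcdef
  have hc1 : c.val + 1 = δ.val % p := by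
    show δ.val % p - 1 + 1 = δ.val % p
    omega
  -- key computation
  have hnR : 4 * ((aN : ℕ) : R p m) ^ 3 + 27 * ((bN : ℕ) : R p m) ^ 2
      = (p : R p m) ^ m * ((n' : ℕ) : R p m) := by
    have hcast := congrArg (Nat.cast : ℕ → R p m) hn'
    push_cast at hcast
    exact hcast
  have hA4 : (((c.val + 1) * p ^ m : ℕ) : R p m) = 4 * ((aN : ℕ) : R p m) + 27 * (t : R p m) ^ 2 := by
    apply (hau.pow 2).mul_right_cancel
    have hRHS : (4 * ((aN : ℕ) : R p m) + 27 * (t : R p m) ^ 2) * ((aN : ℕ) : R p m) ^ 2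
        = 4 * ((aN : ℕ) : R p m) ^ 3 + 27 * ((bN : ℕ) : R p m) ^ 2 := by
      rw [htR]
      calc (4 * ((aN : ℕ) : R p m) + 27 * (((bN : ℕ) : R p m) * (↑hau.unit⁻¹ : R p m)) ^ 2) * ((aN : ℕ) : R p m) ^ 2
          = 4 * ((aN : ℕ) : R p m) ^ 3
            + 27 * ((bN : ℕ) : R p m) ^ 2 * ((↑hau.unit⁻¹ : R p m) * ((aN : ℕ) : R p m)) ^ 2 := by ring
        _ = 4 * ((aN : ℕ) : R p m) ^ 3 + 27 * ((bN : ℕ) : R p m) ^ 2 := by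
            linear_combination (27 : R p m) * ((bN : ℕ) : R p m) ^ 2
              * ((↑hau.unit⁻¹ : R p m) * ((aN : ℕ) : R p m) + 1) * hinv
    rw [hRHS]
    calc (((c.val + 1) * p ^ m : ℕ) : R p m) * ((aN : ℕ) : R p m) ^ 2
        = (p : R p m) ^ m * ((δ.val % p : ℕ) : R p m) * ((aN : ℕ) : R p m) ^ 2 := by
          rw [show (c.val + 1) * p ^ m = (δ.val % p) * p ^ m from by rw [hc1]]
          push_cast
          ring
      _ = (p : R p m) ^ m * δ * ((aN : ℕ) : R p m) ^ 2 := by rw [← pm_mul hp δ]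
      _ = (p : R p m) ^ m * (((n' : ℕ) : R p m) * ((↑hau.unit⁻¹ : R p m) * ((aN : ℕ) : R p m)) ^ 2) := by
          linear_combination (p : R p m) ^ m * ((aN : ℕ) : R p m) ^ 2 * hδdef
      _ = (p : R p m) ^ m * ((n' : ℕ) : R p m) := by
          linear_combination (p : R p m) ^ m * ((n' : ℕ) : R p m)
            * ((↑hau.unit⁻¹ : R p m) * ((aN : ℕ) : R p m) + 1) * hinv
      _ = 4 * ((aN : ℕ) : R p m) ^ 3 + 27 * ((bN : ℕ) : R p m) ^ 2 := hnR.symm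
  have ha0N : a0 p m t c = ((aN : ℕ) : R p m) := by
    unfold a0
    rw [hA4]
    rw [show (4 * ((aN : ℕ) : R p m) + 27 * (t : R p m) ^ 2 - 27 * (t : R p m) ^ 2)
        = ((aN : ℕ) : R p m) * 4 from by ring]
    rw [mul_assoc, ZMod.mul_inv_of_unit _ (unit4 hp h5), mul_one]
  have hb0N : (t : R p m) * a0 p m t c = ((bN : ℕ) : R p m) := by
    rw [ha0N, htR]
    linear_combination ((bN : ℕ) : R p m) * hinv
  -- assemble
  have hidx_a : aN / p ^ (m + 1) < p ^ 3 := by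
    apply Nat.div_lt_of_lt_mul
    calc aN < p ^ (m + 4) := haNlt
      _ = p ^ (m + 1) * p ^ 3 := by ring
  have hidx_b : bN / p ^ (m + 1) < p ^ 2 := by
    apply Nat.div_lt_of_lt_mul
    calc bN < p ^ (m + 3) := hbNlt
      _ = p ^ (m + 1) * p ^ 2 := by ring
  refine ⟨⟨t, c, ⟨aN / p ^ (m + 1), hidx_a⟩, ⟨bN / p ^ (m + 1), hidx_b⟩⟩, ?_⟩
  have hvA : (a0 p m t c).val = aN % p ^ (m + 1) := by rw [ha0N, ZMod.val_natCast]
  have hvB : ((t : R p m) * a0 p m t c).val = bN % p ^ (m + 1) := by rw [hb0N, ZMod.val_natCast]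
  refine Prod.ext ?_ ?_
  · show ((p ^ 2 * ((a0 p m t c).val + (aN / p ^ (m + 1)) * p ^ (m + 1)) : ℕ) : ℤ) = A
    rw [hvA, Nat.mod_add_div' aN (p ^ (m + 1)), ha, ← haZ]
    push_cast
    ring
  · show ((p ^ 3 * (((t : R p m) * a0 p m t c).val + (bN / p ^ (m + 1)) * p ^ (m + 1)) : ℕ) : ℤ) = B
    rw [hvB, Nat.mod_add_div' bN (p ^ (m + 1)), hb, ← hbZ]
    push_cast
    ring


end Stmt7

theorem stmt_7 (p : ℕ) (hp : p.Prime) (h5 : 5 ≤ p) (m : ℕ) (hm : 1 ≤ m) :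
    {AB : ℤ × ℤ | 0 ≤ AB.1 ∧ AB.1 < (p : ℤ) ^ (m + 6) ∧ 0 ≤ AB.2 ∧ AB.2 < (p : ℤ) ^ (m + 6) ∧
        ((p : ℤ) ^ 2 ∣ AB.1 ∧ ¬ (p : ℤ) ^ 3 ∣ AB.1) ∧
        ((p : ℤ) ^ 3 ∣ AB.2 ∧ ¬ (p : ℤ) ^ 4 ∣ AB.2) ∧
        (p : ℤ) ^ m ∣ (4 * (AB.1 / (p : ℤ) ^ 2) ^ 3 + 27 * (AB.2 / (p : ℤ) ^ 3) ^ 2) ∧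
        ¬ (p : ℤ) ^ (m + 1) ∣ (4 * (AB.1 / (p : ℤ) ^ 2) ^ 3 + 27 * (AB.2 / (p : ℤ) ^ 3) ^ 2)}.ncard
      = p ^ (m + 5) * (p - 1) ^ 2 := by
  classical
  haveI := Stmt7.neZeroQ (m := m) hp
  have hset : {AB : ℤ × ℤ | 0 ≤ AB.1 ∧ AB.1 < (p : ℤ) ^ (m + 6) ∧ 0 ≤ AB.2 ∧ AB.2 < (p : ℤ) ^ (m + 6) ∧
        ((p : ℤ) ^ 2 ∣ AB.1 ∧ ¬ (p : ℤ) ^ 3 ∣ AB.1) ∧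
        ((p : ℤ) ^ 3 ∣ AB.2 ∧ ¬ (p : ℤ) ^ 4 ∣ AB.2) ∧
        (p : ℤ) ^ m ∣ (4 * (AB.1 / (p : ℤ) ^ 2) ^ 3 + 27 * (AB.2 / (p : ℤ) ^ 3) ^ 2) ∧
        ¬ (p : ℤ) ^ (m + 1) ∣ (4 * (AB.1 / (p : ℤ) ^ 2) ^ 3 + 27 * (AB.2 / (p : ℤ) ^ 3) ^ 2)}
      = Set.range (Stmt7.f p m) := by
    ext AB
    simp only [Set.mem_setOf_eq, Set.mem_range]
    constructor
    · rintro ⟨h1, h2, h3, h4, ⟨h5a, h5b⟩, ⟨h6a, h6b⟩, h7, h8⟩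
      obtain ⟨x, hx⟩ := Stmt7.surj hp h5 hm AB.1 AB.2 h1 h2 h3 h4 h5a h5b h6a h6b h7 h8
      exact ⟨x, by rw [hx]⟩
    · rintro ⟨x, rfl⟩
      exact Stmt7.mem hp h5 hm x
  rw [hset, ← Nat.card_coe_set_eq, Nat.card_range_of_injective (Stmt7.f_inj hp h5 hm)]
  rw [Nat.card_prod, Nat.card_prod, Nat.card_prod]
  simp only [Nat.card_eq_fintype_card, Fintype.card_fin]
  rw [ZMod.card_units_eq_totient, Nat.totient_prime_pow hp (Nat.succ_pos m)]
  show p ^ (m + 1 - 1) * (p - 1) * ((p - 1) * (p ^ 3 * p ^ 2)) = p ^ (m + 5) * (p - 1) ^ 2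
  have hsimp : m + 1 - 1 = m := rfl
  rw [hsimp]
  ring
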